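/- Let ω : ℤ → ℝ be translation-bounded with ω(0) = 0, and suppose there exist β with 1/2 < β ≤ 1 and a constant B > 0 such that |n|^β ≤ B·|ω(n)| for all n ≠ 0. Then the set { f̂ : f : ℤ → ℂ finitely supported, f(0) = 0, ‖[M_ω, π_f]‖ ≤ 1 } is totally bounded in the supremum norm on continuous functions on ℝ/ℤ. (Since ‖π_f‖ equals the supremum norm of f̂, this expresses that L_ω(f) = ‖[M_ω,π_f]‖ is a Lip-norm on C*(ℤ) ≅ C(𝕋).) -/

import Mathlib

open scoped ENNReal Real

/-- Theorem 5.3 of Rieffel: if `ω : ℤ → ℝ` is translation-bounded, `ω(0) = 0`, and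
`|n|^β ≤ B·|ω(n)|` for some `1/2 < β ≤ 1`, then `L_ω(f) = ‖[M_ω, π_f]‖` is a Lip-norm
on `C*(ℤ) ≅ C(𝕋)`: the set of Fourier transforms `f̂` of finitely supported `f` with
`f(0) = 0` and `‖[M_ω, π_f]‖ ≤ 1` is totally bounded in the supremum norm. -/
theorem stmt7 (ω : ℤ → ℝ) (hω0 : ω 0 = 0)
    (hωtb : ∀ n : ℤ, ∃ C : ℝ, ∀ m : ℤ, |ω m - ω (m - n)| ≤ C)
    (β B : ℝ) (hβ : 1 / 2 < β) (hβ1 : β ≤ 1) (hB : 0 < B)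
    (hgrowth : ∀ n : ℤ, n ≠ 0 → |(n : ℝ)| ^ β ≤ B * |ω n|) :
    TotallyBounded {g : C(UnitAddCircle, ℂ) |
      ∃ f : ℤ → ℂ, (Function.support f).Finite ∧ f 0 = 0 ∧
        (∃ D : lp (fun _ : ℤ => ℂ) 2 →L[ℂ] lp (fun _ : ℤ => ℂ) 2,
          (∀ (ξ : lp (fun _ : ℤ => ℂ) 2) (m : ℤ),
            D ξ m = ∑ᶠ n : ℤ, f n * ((ω m - ω (m - n) : ℝ) : ℂ) * ξ (m - n)) ∧
          ‖D‖ ≤ 1) ∧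
        (∀ x : ℝ, g (x : UnitAddCircle) =
          ∑ᶠ n : ℤ, f n * Complex.exp (2 * Real.pi * Complex.I * n * x))} := by
  have hβpos : 0 < β := by linarith
  -- positivity of |ω n| for n ≠ 0
  have hωpos : ∀ n : ℤ, n ≠ 0 → 0 < |ω n| := by
    intro n hn
    have h1 : 0 < |(n : ℝ)| ^ β :=
      Real.rpow_pos_of_pos (abs_pos.mpr (Int.cast_ne_zero.mpr hn)) β
    nlinarith [hgrowth n hn, abs_nonneg (ω n)]
  -- the summable weight
  have hwsum0 : Summable (fun n : ℤ => ((|(n:ℝ)| ^ β)⁻¹)^2) := by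
    have key : Summable (fun n : ℕ => (((n:ℝ) ^ β)⁻¹)^2) := by
      have h2 : Summable (fun n : ℕ => ((n:ℝ) ^ (β*2))⁻¹) :=
        Real.summable_nat_rpow_inv.mpr (by linarith)
      refine h2.congr fun n => ?_
      rw [inv_pow, ← Real.rpow_natCast ((n:ℝ) ^ β) 2, ← Real.rpow_mul (Nat.cast_nonneg n)]
      norm_num
    apply Summable.of_nat_of_neg
    · refine key.congr fun n => ?_
      norm_num
    · refine key.congr fun n => ?_
      push_cast
      rw [abs_neg, abs_of_nonneg (Nat.cast_nonneg n)]
  have hwsum : Summable (fun n : ℤ => B^2 * ((|(n:ℝ)| ^ β)⁻¹)^2) := hwsum0.mul_left _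
  rw [Metric.totallyBounded_iff]
  intro ε hε
  have hε4 : 0 < ε/4 := by linarith
  obtain ⟨s₀', hs₀'⟩ := summable_iff_vanishing.mp hwsum (Set.Iio ((ε/4)^2))
    (Iio_mem_nhds (by positivity))
  set s₀ : Finset ℤ := insert 0 s₀' with hs₀def
  -- the compact set of truncated trigonometric polynomials
  set Ψ : ((↥s₀) → ℂ) → C(UnitAddCircle, ℂ) :=
    fun c => ∑ n : ↥s₀, c n • fourier (T := 1) (n:ℤ) with hΨdef
  have hK : IsCompact (Ψ '' Metric.closedBall 0 B) := by
    refine (isCompact_closedBall _ _).image ?_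
    exact continuous_finset_sum _ fun n _ => (continuous_apply n).smul continuous_const
  obtain ⟨t, htfin, htcover⟩ :=
    Metric.totallyBounded_iff.mp hK.totallyBounded (ε/2) (by linarith)
  refine ⟨t, htfin, ?_⟩
  rintro g ⟨f, hfin, hf0, ⟨D, hDapp, hDnorm⟩, hg⟩
  -- Step 1: ℓ² bound on coefficients times ω
  have hsum : ∀ s : Finset ℤ, ∑ m ∈ s, (‖f m‖ * |ω m|)^2 ≤ 1 := by
    intro s
    set ξ : lp (fun _ : ℤ => ℂ) 2 := lp.single 2 (0:ℤ) (1:ℂ) with hξ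
    have hξnorm : ‖ξ‖ = 1 := by
      have := lp.norm_single (p := 2) (E := fun _ : ℤ => ℂ) (by norm_num) 0 (1:ℂ)
      exact this.trans (by simp)
    have hDξ : ∀ m : ℤ, D ξ m = f m * ((ω m : ℝ) : ℂ) := by
      intro m
      rw [hDapp]
      have heq := finsum_eq_single (fun n : ℤ => f n * ((ω m - ω (m - n) : ℝ) : ℂ) * ξ (m - n)) m
        (fun x hx => by
          have hz : ξ (m - x) = 0 :=
            lp.single_apply_ne (E := fun _ : ℤ => ℂ) 2 0 (1:ℂ) (sub_ne_zero.mpr hx.symm)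
          simp [hz])
      rw [heq]
      have h1 : ξ ((0:ℤ)) = 1 := lp.single_apply_self (E := fun _ : ℤ => ℂ) 2 0 (1:ℂ)
      simp only [sub_self, h1, hω0, Complex.ofReal_sub, Complex.ofReal_zero, sub_zero, mul_one]
    have hbound : ‖D ξ‖ ≤ 1 := by
      calc ‖D ξ‖ ≤ ‖D‖ * ‖ξ‖ := D.le_opNorm ξ
      _ ≤ 1 := by rw [hξnorm, mul_one]; exact hDnorm
    have key := lp.sum_rpow_le_norm_rpow (p := 2) (E := fun _ : ℤ => ℂ) (by norm_num) (D ξ) s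
    have h2 : ((2 : ℝ≥0∞)).toReal = (2:ℝ) := by norm_num
    rw [h2] at key
    calc ∑ m ∈ s, (‖f m‖ * |ω m|)^2 = ∑ m ∈ s, ‖(D ξ) m‖ ^ (2:ℝ) := by
          refine Finset.sum_congr rfl fun m _ => ?_
          rw [hDξ m, show ((2:ℝ)) = ((2:ℕ):ℝ) by norm_num, Real.rpow_natCast,
            norm_mul, Complex.norm_real, Real.norm_eq_abs]
      _ ≤ ‖D ξ‖ ^ (2:ℝ) := key
      _ ≤ 1 := by
          rw [show ((2:ℝ)) = ((2:ℕ):ℝ) by norm_num, Real.rpow_natCast]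
          exact pow_le_one₀ (norm_nonneg _) hbound
  -- Step 2: individual coefficient bounds
  have hfb1 : ∀ n : ℤ, ‖f n‖ * |ω n| ≤ 1 := by
    intro n
    have h := hsum {n}
    simp only [Finset.sum_singleton] at h
    exact (pow_le_one_iff_of_nonneg (by positivity) two_ne_zero).mp h
  have honeB : ∀ n : ℤ, n ≠ 0 → 1 ≤ B * |ω n| := by
    intro n hn
    have h1 : (1:ℝ) ≤ |(n:ℝ)| := by
      rw [← Int.cast_abs]
      exact_mod_cast Int.one_le_abs hn
    have h2 : (1:ℝ) ≤ |(n:ℝ)| ^ β := by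
      calc (1:ℝ) = 1 ^ β := (Real.one_rpow β).symm
      _ ≤ |(n:ℝ)| ^ β := Real.rpow_le_rpow zero_le_one h1 hβpos.le
    linarith [hgrowth n hn]
  have hfB : ∀ n : ℤ, ‖f n‖ ≤ B := by
    intro n
    by_cases hn : n = 0
    · rw [hn, hf0, norm_zero]; exact hB.le
    · nlinarith [hfb1 n, honeB n hn, norm_nonneg (f n), hB]
  -- the tail estimate
  set F : Finset ℤ := hfin.toFinset with hFdef
  set tf : Finset ℤ := F \ s₀ with htfdef
  have h0s₀ : (0:ℤ) ∈ s₀ := Finset.mem_insert_self 0 s₀'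
  have htailsum : ∑ n ∈ tf, ‖f n‖ ≤ ε/4 := by
    have hdisj : Disjoint tf s₀' :=
      Finset.sdiff_disjoint.mono_right (Finset.subset_insert 0 s₀')
    have htail2 : ∑ n ∈ tf, B^2 * ((|(n:ℝ)| ^ β)⁻¹)^2 < (ε/4)^2 := hs₀' tf hdisj
    have hCS := Finset.sum_mul_sq_le_sq_mul_sq tf (fun n => ‖f n‖ * |ω n|) (fun n => |ω n|⁻¹)
    have hne0 : ∀ n ∈ tf, n ≠ 0 := by
      intro n hn h0
      exact (Finset.mem_sdiff.mp hn).2 (h0 ▸ h0s₀)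
    have hlhs : ∑ n ∈ tf, (‖f n‖ * |ω n|) * |ω n|⁻¹ = ∑ n ∈ tf, ‖f n‖ := by
      refine Finset.sum_congr rfl fun n hn => ?_
      rw [mul_assoc, mul_inv_cancel₀ (ne_of_gt (hωpos n (hne0 n hn))), mul_one]
    have hrhs : ∑ n ∈ tf, (|ω n|⁻¹)^2 ≤ ∑ n ∈ tf, B^2 * ((|(n:ℝ)| ^ β)⁻¹)^2 := by
      refine Finset.sum_le_sum fun n hn => ?_
      have hn0 := hne0 n hn
      have hpos : 0 < |(n:ℝ)| ^ β :=
        Real.rpow_pos_of_pos (abs_pos.mpr (Int.cast_ne_zero.mpr hn0)) β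
      have h1 : |(n:ℝ)| ^ β / B ≤ |ω n| := by
        rw [div_le_iff₀ hB]
        linarith [hgrowth n hn0]
      have h2 : |ω n|⁻¹ ≤ B * (|(n:ℝ)| ^ β)⁻¹ := by
        have := inv_anti₀ (by positivity : 0 < |(n:ℝ)| ^ β / B) h1
        rwa [inv_div, div_eq_mul_inv] at this
      calc (|ω n|⁻¹)^2 ≤ (B * (|(n:ℝ)| ^ β)⁻¹)^2 :=
            pow_le_pow_left₀ (by positivity) h2 2
        _ = B^2 * ((|(n:ℝ)| ^ β)⁻¹)^2 := by ring
    have hsq : (∑ n ∈ tf, ‖f n‖)^2 ≤ (ε/4)^2 := by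
      rw [← hlhs]
      calc (∑ n ∈ tf, (‖f n‖ * |ω n|) * |ω n|⁻¹)^2
          ≤ (∑ n ∈ tf, (‖f n‖ * |ω n|)^2) * ∑ n ∈ tf, (|ω n|⁻¹)^2 := hCS
        _ ≤ 1 * (ε/4)^2 := by
            refine mul_le_mul (hsum tf) (hrhs.trans htail2.le) ?_ zero_le_one
            positivity
        _ = (ε/4)^2 := one_mul _
    exact le_of_pow_le_pow_left₀ two_ne_zero hε4.le hsq
  -- the truncated polynomial
  set c : (↥s₀) → ℂ := fun n => f ↑n with hcdef
  have hkK : Ψ c ∈ Ψ '' Metric.closedBall 0 B := by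
    refine ⟨c, ?_, rfl⟩
    rw [Metric.mem_closedBall, dist_zero_right]
    exact (pi_norm_le_iff_of_nonneg hB.le).mpr fun n => hfB ↑n
  -- distance from g to the truncation
  have hgk : dist g (Ψ c) ≤ ε/4 := by
    rw [dist_eq_norm]
    refine (ContinuousMap.norm_le _ hε4.le).mpr fun x => ?_
    obtain ⟨r, rfl⟩ := QuotientAddGroup.mk_surjective x
    have hgr : g ((r:ℝ) : UnitAddCircle) = ∑ n ∈ F ∪ s₀,
        f n * Complex.exp (2 * Real.pi * Complex.I * n * r) := by
      rw [hg r]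
      refine finsum_eq_sum_of_support_subset _ ?_
      intro n hn
      have : f n ≠ 0 := fun h => by simp [h] at hn
      simp only [Finset.coe_union, Set.mem_union]
      exact Or.inl (by rw [hFdef]; simpa using this)
    have hkr : Ψ c ((r:ℝ) : UnitAddCircle) = ∑ n ∈ s₀,
        f n * Complex.exp (2 * Real.pi * Complex.I * n * r) := by
      rw [hΨdef]
      simp only [ContinuousMap.coe_sum, Finset.sum_apply, ContinuousMap.coe_smul, Pi.smul_apply]
      rw [← Finset.sum_coe_sort s₀
        (fun n => f n * Complex.exp (2 * Real.pi * Complex.I * n * r))]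
      refine Finset.sum_congr rfl fun n _ => ?_
      rw [fourier_coe_apply]
      norm_num
      rfl
    have hdiff : g ((r:ℝ) : UnitAddCircle) - Ψ c ((r:ℝ) : UnitAddCircle) =
        ∑ n ∈ tf, f n * Complex.exp (2 * Real.pi * Complex.I * n * r) := by
      rw [hgr, hkr, htfdef, ← Finset.union_sdiff_right]
      exact (Finset.sum_sdiff_eq_sub (f := fun n : ℤ => f n * Complex.exp (2 * Real.pi * Complex.I * n * r)) (Finset.subset_union_right : s₀ ⊆ F ∪ s₀)).symm
    rw [ContinuousMap.sub_apply, hdiff]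
    calc ‖∑ n ∈ tf, f n * Complex.exp (2 * Real.pi * Complex.I * n * r)‖
        ≤ ∑ n ∈ tf, ‖f n * Complex.exp (2 * Real.pi * Complex.I * n * r)‖ :=
          norm_sum_le _ _
      _ = ∑ n ∈ tf, ‖f n‖ := by
          refine Finset.sum_congr rfl fun n _ => ?_
          rw [norm_mul]
          have : ‖Complex.exp (2 * Real.pi * Complex.I * n * r)‖ = 1 := by
            rw [Complex.norm_exp]
            norm_num [Complex.add_re, Complex.mul_re]
          rw [this, mul_one]
      _ ≤ ε/4 := htailsum
  -- finish
  obtain ⟨y, hyt, hy⟩ := Set.mem_iUnion₂.mp (htcover hkK)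
  refine Set.mem_iUnion₂.mpr ⟨y, hyt, ?_⟩
  rw [Metric.mem_ball] at hy ⊢
  calc dist g y ≤ dist g (Ψ c) + dist (Ψ c) y := dist_triangle _ _ _
    _ < ε/4 + ε/2 := by exact add_lt_add_of_le_of_lt hgk hy
    _ < ε := by linarith
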